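/- Let G be a triangle-free graph on n vertices. Then the spectral radius of the adjacency matrix of G satisfies ρ(G) ≤ √(⌊n/2⌋·⌈n/2⌉), with equality if and only if G is isomorphic to the complete bipartite graph T_2(n) with part sizes ⌊n/2⌋ and ⌈n/2⌉. -/

import Mathlib

open Finset

lemma mem_spec_iff {m : Type*} [Fintype m] [DecidableEq m] {A : Matrix m m ℝ} {μ : ℝ} :
    μ ∈ spectrum ℝ A ↔ ∃ x : m → ℝ, x ≠ 0 ∧ A.mulVec x = μ • x := by
  rw [← AlgEquiv.spectrum_eq (Matrix.toLinAlgEquiv' : Matrix m m ℝ ≃ₐ[ℝ] _) A,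
    ← Module.End.hasEigenvalue_iff_mem_spectrum]
  constructor
  · intro h
    obtain ⟨x, hx⟩ := h.exists_hasEigenvector
    exact ⟨x, hx.2, by simpa [Matrix.toLinAlgEquiv'_apply] using hx.apply_eq_smul⟩
  · rintro ⟨x, hx0, hx⟩
    exact Module.End.hasEigenvalue_of_hasEigenvector
      ⟨by rw [Module.End.mem_eigenspace_iff, Matrix.toLinAlgEquiv'_apply]; exact hx, hx0⟩

lemma sum_deg_nbhd_le {n : ℕ} (G : SimpleGraph (Fin n)) [DecidableRel G.Adj]
    (hfree : G.CliqueFree 3) (u : Fin n) :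
    ∑ w ∈ G.neighborFinset u, G.degree w ≤ #G.edgeFinset := by
  classical
  have : ∑ w ∈ G.neighborFinset u, G.degree w
      = #((G.neighborFinset u).sigma fun w => G.neighborFinset w) := by
    rw [Finset.card_sigma]; rfl
  rw [this]
  apply Finset.card_le_card_of_injOn (fun p => s(p.1, p.2))
  · rintro ⟨w, v⟩ hp
    simp only [Finset.mem_coe, Finset.mem_sigma, SimpleGraph.mem_neighborFinset] at hp
    simpa [SimpleGraph.mem_edgeFinset] using hp.2
  · rintro ⟨w, v⟩ hp ⟨w', v'⟩ hp' he
    simp only [Finset.mem_coe, Finset.mem_sigma, SimpleGraph.mem_neighborFinset] at hp hp'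
    rcases Sym2.eq_iff.1 he with ⟨rfl, rfl⟩ | ⟨rfl, rfl⟩
    · rfl
    · exact absurd (SimpleGraph.is3Clique_triple_iff.2 ⟨hp.1, hp'.1, hp.2⟩)
        (hfree {u, w, v})

lemma eig_sq_le {n : ℕ} (G : SimpleGraph (Fin n)) [DecidableRel G.Adj]
    (hfree : G.CliqueFree 3) {μ : ℝ} (hμ : μ ∈ spectrum ℝ (G.adjMatrix ℝ)) :
    μ ^ 2 ≤ (#G.edgeFinset : ℝ) := by
  classical
  obtain ⟨x, hx0, hx⟩ := mem_spec_iff.1 hμ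
  obtain ⟨v0, hv0⟩ : ∃ v, x v ≠ 0 := by
    by_contra h; push_neg at h; exact hx0 (funext h)
  obtain ⟨u, -, hu⟩ := Finset.exists_max_image Finset.univ (fun v => |x v|)
    ⟨v0, Finset.mem_univ v0⟩
  have hu' : ∀ v, |x v| ≤ |x u| := fun v => hu v (Finset.mem_univ v)
  have hxu : 0 < |x u| := lt_of_lt_of_le (abs_pos.2 hv0) (hu' v0)
  have h2 : (G.adjMatrix ℝ).mulVec ((G.adjMatrix ℝ).mulVec x) = (μ ^ 2) • x := by
    rw [hx, Matrix.mulVec_smul, hx, smul_smul, sq]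
  have key : μ ^ 2 * |x u| ≤ (#G.edgeFinset : ℝ) * |x u| := by
    have e1 : (μ ^ 2) * x u = ∑ w ∈ G.neighborFinset u, ∑ v ∈ G.neighborFinset w, x v := by
      have := congrFun h2 u
      rw [SimpleGraph.adjMatrix_mulVec_apply] at this
      simp only [Pi.smul_apply, smul_eq_mul] at this
      rw [← this]
      exact Finset.sum_congr rfl fun w _ => by rw [SimpleGraph.adjMatrix_mulVec_apply]
    calc μ ^ 2 * |x u| = |μ ^ 2 * x u| := by
          rw [abs_mul, abs_of_nonneg (sq_nonneg μ)]
      _ ≤ ∑ w ∈ G.neighborFinset u, ∑ v ∈ G.neighborFinset w, |x v| := by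
          rw [e1]
          refine (Finset.abs_sum_le_sum_abs _ _).trans ?_
          exact Finset.sum_le_sum fun w _ => Finset.abs_sum_le_sum_abs _ _
      _ ≤ ∑ w ∈ G.neighborFinset u, ∑ _v ∈ G.neighborFinset w, |x u| :=
          Finset.sum_le_sum fun w _ => Finset.sum_le_sum fun v _ => hu' v
      _ = (∑ w ∈ G.neighborFinset u, (G.degree w : ℝ)) * |x u| := by
          rw [Finset.sum_mul]
          exact Finset.sum_congr rfl fun w _ => by
            rw [Finset.sum_const, SimpleGraph.degree, nsmul_eq_mul]
      _ ≤ (#G.edgeFinset : ℝ) * |x u| := by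
          apply mul_le_mul_of_nonneg_right _ (le_of_lt hxu)
          rw [← Nat.cast_sum]
          exact_mod_cast sum_deg_nbhd_le G hfree u
  exact le_of_mul_le_mul_right key hxu

def tbFun {n : ℕ} (i : Fin n) : Fin (n / 2) ⊕ Fin ((n + 1) / 2) :=
  if h : (i : ℕ) % 2 = 1 then Sum.inl ⟨(i : ℕ) / 2, by have := i.2; omega⟩
  else Sum.inr ⟨(i : ℕ) / 2, by have := i.2; omega⟩

def tbInv {n : ℕ} : Fin (n / 2) ⊕ Fin ((n + 1) / 2) → Fin n
  | .inl j => ⟨2 * (j : ℕ) + 1, by have := j.2; omega⟩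
  | .inr j => ⟨2 * (j : ℕ), by have := j.2; omega⟩

lemma tb_left {n : ℕ} (i : Fin n) : tbInv (tbFun i) = i := by
  unfold tbFun
  by_cases h : (i : ℕ) % 2 = 1
  · rw [dif_pos h]; exact Fin.ext (by simp [tbInv]; omega)
  · rw [dif_neg h]; exact Fin.ext (by simp [tbInv]; omega)

lemma tb_right {n : ℕ} (p : Fin (n / 2) ⊕ Fin ((n + 1) / 2)) : tbFun (tbInv p) = p := by
  rcases p with j | j
  · show tbFun (⟨2 * (j : ℕ) + 1, _⟩ : Fin n) = Sum.inl j
    unfold tbFun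
    rw [dif_pos (by simp only [Fin.val_mk]; omega)]
    exact congrArg Sum.inl (Fin.ext (by simp only [Fin.val_mk]; omega))
  · show tbFun (⟨2 * (j : ℕ), _⟩ : Fin n) = Sum.inr j
    unfold tbFun
    rw [dif_neg (by simp only [Fin.val_mk]; omega)]
    exact congrArg Sum.inr (Fin.ext (by simp only [Fin.val_mk]; omega))

def turanIso (n : ℕ) :
    SimpleGraph.turanGraph n 2 ≃g completeBipartiteGraph (Fin (n / 2)) (Fin ((n + 1) / 2)) where
  toFun := tbFun
  invFun := tbInv
  left_inv := tb_left
  right_inv := tb_right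
  map_rel_iff' := by
    intro i j
    show (completeBipartiteGraph _ _).Adj (tbFun i) (tbFun j) ↔
      (SimpleGraph.turanGraph n 2).Adj i j
    unfold tbFun
    by_cases hi : (i : ℕ) % 2 = 1 <;> by_cases hj : (j : ℕ) % 2 = 1 <;>
      simp only [hi, hj, dif_pos, dif_neg, dite_true, dite_false, completeBipartiteGraph,
        SimpleGraph.turanGraph, Sum.isLeft_inl, Sum.isRight_inr, Sum.isLeft_inr,
        Sum.isRight_inl] <;> simp <;> omega

instance cbpDec (a b : ℕ) : DecidableRel (completeBipartiteGraph (Fin a) (Fin b)).Adj :=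
  fun v w => by unfold completeBipartiteGraph; simp only; infer_instance

lemma cbp_degree_inl (a b : ℕ) (i : Fin a) :
    (completeBipartiteGraph (Fin a) (Fin b)).degree (Sum.inl i) = b := by
  have : (completeBipartiteGraph (Fin a) (Fin b)).neighborFinset (Sum.inl i)
      = Finset.univ.map ⟨Sum.inr, Sum.inr_injective⟩ := by
    ext w
    rcases w with x | y <;> simp [SimpleGraph.mem_neighborFinset]
  rw [SimpleGraph.degree, this, Finset.card_map, Finset.card_univ, Fintype.card_fin]

lemma cbp_degree_inr (a b : ℕ) (j : Fin b) :
    (completeBipartiteGraph (Fin a) (Fin b)).degree (Sum.inr j) = a := by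
  have : (completeBipartiteGraph (Fin a) (Fin b)).neighborFinset (Sum.inr j)
      = Finset.univ.map ⟨Sum.inl, Sum.inl_injective⟩ := by
    ext w
    rcases w with x | y <;> simp [SimpleGraph.mem_neighborFinset]
  rw [SimpleGraph.degree, this, Finset.card_map, Finset.card_univ, Fintype.card_fin]

lemma cbp_card_edges (a b : ℕ) :
    #(completeBipartiteGraph (Fin a) (Fin b)).edgeFinset = a * b := by
  have h := SimpleGraph.sum_degrees_eq_twice_card_edges (completeBipartiteGraph (Fin a) (Fin b))
  rw [Fintype.sum_sum_type] at h
  simp only [cbp_degree_inl, cbp_degree_inr, Finset.sum_const, Finset.card_univ,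
    Fintype.card_fin, smul_eq_mul] at h
  rw [Nat.mul_comm b a] at h
  omega

lemma spec_iso {n : ℕ} {W : Type} [Fintype W] [DecidableEq W] (G : SimpleGraph (Fin n))
    [DecidableRel G.Adj] (H : SimpleGraph W) [DecidableRel H.Adj] (f : G ≃g H) :
    spectrum ℝ (H.adjMatrix ℝ) = spectrum ℝ (G.adjMatrix ℝ) := by
  have he : (Matrix.reindexAlgEquiv ℝ ℝ f.toEquiv) (G.adjMatrix ℝ) = H.adjMatrix ℝ := by
    ext w w'
    simp only [Matrix.reindexAlgEquiv_apply, Matrix.reindex_apply, Matrix.submatrix_apply,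
      SimpleGraph.adjMatrix_apply]
    exact if_congr f.symm.map_adj_iff rfl rfl
  rw [← he, AlgEquiv.spectrum_eq]

lemma sqrt_helper (a b : ℝ) (ha : 0 ≤ a) (hb : 0 ≤ b) :
    Real.sqrt (a * b) * Real.sqrt b = b * Real.sqrt a := by
  rw [Real.sqrt_mul ha, mul_assoc, Real.mul_self_sqrt hb, mul_comm]

lemma sqrt_helper2 (a b : ℝ) (ha : 0 ≤ a) (hb : 0 ≤ b) :
    Real.sqrt (a * b) * Real.sqrt a = a * Real.sqrt b := by
  rw [mul_comm a b]
  exact sqrt_helper b a hb ha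

lemma cbp_eig (a b : ℕ) (hab : 0 < a + b) :
    Real.sqrt (a * b) ∈
      spectrum ℝ ((completeBipartiteGraph (Fin a) (Fin b)).adjMatrix ℝ) := by
  rw [mem_spec_iff]
  rcases Nat.eq_zero_or_pos a with ha | ha
  · subst ha
    refine ⟨fun _ => 1, ?_, ?_⟩
    · intro h
      have hb : 0 < b := by omega
      have := congrFun h (Sum.inr ⟨0, hb⟩)
      simpa using this
    · funext v
      rcases v with i | j
      · exact absurd i.2 (by omega)
      · rw [Matrix.mulVec, SimpleGraph.adjMatrix_dotProduct]
        have : (completeBipartiteGraph (Fin 0) (Fin b)).neighborFinset (Sum.inr j) = ∅ := by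
          ext w; rcases w with x | y
          · exact absurd x.2 (by omega)
          · simp [SimpleGraph.mem_neighborFinset]
        simp [this]
  · rcases Nat.eq_zero_or_pos b with hb | hb
    · subst hb
      refine ⟨fun _ => 1, ?_, ?_⟩
      · intro h
        have := congrFun h (Sum.inl ⟨0, ha⟩)
        simpa using this
      · funext v
        rcases v with i | j
        · rw [Matrix.mulVec, SimpleGraph.adjMatrix_dotProduct]
          have : (completeBipartiteGraph (Fin a) (Fin 0)).neighborFinset (Sum.inl i) = ∅ := by
            ext w; rcases w with x | y
            · simp [SimpleGraph.mem_neighborFinset]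
            · exact absurd y.2 (by omega)
          simp [this]
        · exact absurd j.2 (by omega)
    · refine ⟨Sum.elim (fun _ => Real.sqrt b) (fun _ => Real.sqrt a), ?_, ?_⟩
      · intro h
        have := congrFun h (Sum.inl ⟨0, ha⟩)
        simp only [Sum.elim_inl, Pi.zero_apply] at this
        exact absurd this (by positivity)
      · funext v
        rcases v with i | j
        · rw [Matrix.mulVec, SimpleGraph.adjMatrix_dotProduct]
          have hnb : (completeBipartiteGraph (Fin a) (Fin b)).neighborFinset (Sum.inl i)
              = Finset.univ.map ⟨Sum.inr, Sum.inr_injective⟩ := by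
            ext w; rcases w with x | y <;> simp [SimpleGraph.mem_neighborFinset]
          rw [hnb, Finset.sum_map]
          simp only [Function.Embedding.coeFn_mk, Sum.elim_inr, Sum.elim_inl,
            Finset.sum_const, Finset.card_univ, Fintype.card_fin, nsmul_eq_mul,
            Pi.smul_apply, smul_eq_mul]
          rw [sqrt_helper (a : ℝ) (b : ℝ) (by positivity) (by positivity)]
        · rw [Matrix.mulVec, SimpleGraph.adjMatrix_dotProduct]
          have hnb : (completeBipartiteGraph (Fin a) (Fin b)).neighborFinset (Sum.inr j)
              = Finset.univ.map ⟨Sum.inl, Sum.inl_injective⟩ := by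
            ext w; rcases w with x | y <;> simp [SimpleGraph.mem_neighborFinset]
          rw [hnb, Finset.sum_map]
          simp only [Function.Embedding.coeFn_mk, Sum.elim_inl, Sum.elim_inr,
            Finset.sum_const, Finset.card_univ, Fintype.card_fin, nsmul_eq_mul,
            Pi.smul_apply, smul_eq_mul]
          rw [sqrt_helper2 (a : ℝ) (b : ℝ) (by positivity) (by positivity)]

lemma mantel {n : ℕ} (H : SimpleGraph (Fin n)) [DecidableRel H.Adj] (hH : H.CliqueFree 3) :
    H.edgeFinset.card ≤ n / 2 * ((n + 1) / 2) := by
  have ht := SimpleGraph.isTuranMaximal_turanGraph (n := n) (r := 2) (by norm_num)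
  have hle := ht.2 hH
  rwa [(turanIso n).card_edgeFinset_eq, cbp_card_edges] at hle

/-- The spectral radius of the adjacency matrix of `G`: the supremum of the absolute
values of the (real) eigenvalues of the adjacency matrix. -/
noncomputable def adjSpecRad {n : ℕ} (G : SimpleGraph (Fin n)) [DecidableRel G.Adj] : ℝ :=
  sSup { t : ℝ | ∃ μ ∈ spectrum ℝ (G.adjMatrix ℝ), t = |μ| }

theorem stmt_12 (n : ℕ) (G : SimpleGraph (Fin n)) [DecidableRel G.Adj]
    (hfree : G.CliqueFree 3) :
    adjSpecRad G ≤ Real.sqrt (((n / 2 : ℕ) : ℝ) * (((n + 1) / 2 : ℕ) : ℝ)) ∧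
      (adjSpecRad G = Real.sqrt (((n / 2 : ℕ) : ℝ) * (((n + 1) / 2 : ℕ) : ℝ)) ↔
        Nonempty (G ≃g completeBipartiteGraph (Fin (n / 2)) (Fin ((n + 1) / 2)))) := by
  classical
  set a := n / 2 with ha
  set b := (n + 1) / 2 with hb
  set S := { t : ℝ | ∃ μ ∈ spectrum ℝ (G.adjMatrix ℝ), t = |μ| } with hS
  have hub : ∀ t ∈ S, t ≤ Real.sqrt (#G.edgeFinset : ℝ) := by
    rintro t ⟨μ, hμ, rfl⟩
    rw [← Real.sqrt_sq_eq_abs]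
    exact Real.sqrt_le_sqrt (eig_sq_le G hfree hμ)
  have hmab : (#G.edgeFinset : ℝ) ≤ (a : ℝ) * (b : ℝ) := by
    exact_mod_cast mantel G hfree
  have hub2 : ∀ t ∈ S, t ≤ Real.sqrt ((a : ℝ) * (b : ℝ)) :=
    fun t ht => (hub t ht).trans (Real.sqrt_le_sqrt hmab)
  have part1 : adjSpecRad G ≤ Real.sqrt ((a : ℝ) * (b : ℝ)) :=
    Real.sSup_le hub2 (Real.sqrt_nonneg _)
  refine ⟨part1, ?_, ?_⟩
  · -- equality → iso
    intro heq
    rcases Nat.lt_or_ge n 2 with hn | hn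
    · rcases Nat.lt_or_ge n 1 with hn0 | hn1
      · have h0 : n = 0 := by omega
        haveI : IsEmpty (Fin n) := ⟨fun i => by have := i.2; omega⟩
        haveI : IsEmpty (Fin a ⊕ Fin b) := ⟨fun p => by
          rcases p with x | y
          · have := x.2; omega
          · have := y.2; omega⟩
        exact ⟨⟨Equiv.equivOfIsEmpty _ _, fun {v w} => isEmptyElim v⟩⟩
      · have h1 : n = 1 := by omega
        have hb1 : b = 1 := by omega
        refine ⟨⟨⟨fun _ => Sum.inr ⟨0, by omega⟩, fun _ => ⟨0, by omega⟩,
          fun v => Fin.ext (by have := v.2; omega), fun p => ?_⟩, fun {v w} => ?_⟩⟩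
        · rcases p with x | y
          · exact absurd x.2 (by omega)
          · exact congrArg Sum.inr (Fin.ext (by have := y.2; omega))
        · have hvw : v = w := Fin.ext (by have := v.2; have := w.2; omega)
          subst hvw
          simp
    · have hab : 0 < a * b := Nat.mul_pos (by omega) (by omega)
      have hm : #G.edgeFinset = a * b := by
        refine le_antisymm (mantel G hfree) ?_
        by_contra hlt
        push_neg at hlt
        have h1 : Real.sqrt (#G.edgeFinset : ℝ) < Real.sqrt ((a : ℝ) * (b : ℝ)) := by
          apply Real.sqrt_lt_sqrt (by positivity)
          exact_mod_cast hlt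
        have h2 : adjSpecRad G ≤ Real.sqrt (#G.edgeFinset : ℝ) :=
          Real.sSup_le hub (Real.sqrt_nonneg _)
        rw [heq] at h2
        exact absurd (h2.trans_lt h1) (lt_irrefl _)
      have htm : G.IsTuranMaximal 2 :=
        ⟨hfree, fun H _ hH => (mantel H hH).trans_eq hm.symm⟩
      obtain ⟨g⟩ := (SimpleGraph.isTuranMaximal_iff_nonempty_iso_turanGraph
        (by norm_num)).1 htm
      rw [Fintype.card_fin] at g
      exact ⟨(turanIso n).comp g⟩
  · -- iso → equality
    rintro ⟨f⟩
    rcases Nat.eq_zero_or_pos n with hn | hn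
    · refine le_antisymm part1 ?_
      have hz : Real.sqrt ((a : ℝ) * (b : ℝ)) = 0 := by
        have ha0 : a = 0 := by omega
        rw [ha0]; norm_num
      rw [hz]
      exact Real.sSup_nonneg (by rintro t ⟨μ, hμ, rfl⟩; exact abs_nonneg μ)
    · refine le_antisymm part1 ?_
      have hμ := cbp_eig a b (by omega)
      rw [spec_iso G _ f] at hμ
      have hmem : Real.sqrt ((a : ℝ) * (b : ℝ)) ∈ S :=
        ⟨Real.sqrt ((a : ℝ) * (b : ℝ)), hμ, (abs_of_nonneg (Real.sqrt_nonneg _)).symm⟩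
      exact le_csSup ⟨Real.sqrt ((a : ℝ) * (b : ℝ)), hub2⟩ hmem
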